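/- Fix an integer n ≥ 1. Then Σ_{p=0}^{n−1} (Φ_{p;0}/Φ₀)·(Φ_{n−1−p;1}/Φ₀) = n·L^{n−1}·(Φ₁/Φ₀) − ((n²−1)/12)·L^{n−2}·(1 − L^{−n}) in ℚ[[q]] (Φ₀ is invertible since its constant term is 1). -/

import Mathlib

/-- The operator `D = q·d/dq` on `ℚ[[q]]`. -/
noncomputable def Dq (f : PowerSeries ℚ) : PowerSeries ℚ :=
  PowerSeries.mk fun d => (d : ℚ) * PowerSeries.coeff d f

open PowerSeries in
lemma Dq_eq (f : ℚ⟦X⟧) : Dq f = X * d⁄dX ℚ f := by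
  ext d
  cases d with
  | zero => simp [Dq]
  | succ d => simp [Dq, PowerSeries.coeff_succ_X_mul, PowerSeries.coeff_derivative]; ring

lemma Dq_mul (f g : PowerSeries ℚ) : Dq (f * g) = Dq f * g + f * Dq g := by
  rw [Dq_eq, Dq_eq, Dq_eq, Derivation.leibniz]
  simp [smul_eq_mul]; ring

lemma Dq_one : Dq (1 : PowerSeries ℚ) = 0 := by rw [Dq_eq]; simp

lemma Dq_pow (f : PowerSeries ℚ) (k : ℕ) :
    Dq (f ^ k) = (PowerSeries.C (k : ℚ)) * f ^ (k - 1) * Dq f := by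
  induction k with
  | zero => simp [Dq_one]
  | succ k ih =>
    rw [pow_succ, Dq_mul, ih]
    cases k with
    | zero => simp [Dq_one]
    | succ k =>
      push_cast
      simp only [Nat.add_sub_cancel, map_add, map_one]
      ring

open PowerSeries in
lemma Dq_oneX : Dq (1 + X : ℚ⟦X⟧) = X := by
  ext d
  cases d with
  | zero => simp [Dq]
  | succ d =>
    simp [Dq, PowerSeries.coeff_one, PowerSeries.coeff_X]
    rcases eq_or_ne d 0 with h | h <;> simp [h]

lemma sum_id' (n : ℕ) : ∑ m ∈ Finset.range n, (m : ℚ) = n * (n - 1) / 2 := by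
  induction n with
  | zero => simp
  | succ n ih => rw [Finset.sum_range_succ, ih]; push_cast; ring

lemma sum_sq' (n : ℕ) : ∑ m ∈ Finset.range n, (m : ℚ) ^ 2 = n * (n - 1) * (2 * n - 1) / 6 := by
  induction n with
  | zero => simp
  | succ n ih => rw [Finset.sum_range_succ, ih]; push_cast; ring

lemma sum_c (n : ℕ) :
    ∑ m ∈ Finset.range n, ((m : ℚ) * ((m : ℚ) - (n : ℚ)) / 2) =
      -((n : ℚ) * ((n : ℚ) ^ 2 - 1)) / 12 := by
  have h1 := sum_id' n
  have h2 := sum_sq' n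
  have h3 : ∑ m ∈ Finset.range n, ((m : ℚ) * ((m : ℚ) - (n : ℚ)) / 2) =
      (∑ m ∈ Finset.range n, (m : ℚ) ^ 2) / 2 -
        (n : ℚ) / 2 * ∑ m ∈ Finset.range n, (m : ℚ) := by
    rw [Finset.sum_div, Finset.mul_sum, ← Finset.sum_sub_distrib]
    apply Finset.sum_congr rfl
    intros; ring
  rw [h3, h1, h2]; ring

/-- `Σ_{p=0}^{n−1} (Φ_{p;0}/Φ₀)·(Φ_{n−1−p;1}/Φ₀)
  = n·L^{n−1}·(Φ₁/Φ₀) − ((n²−1)/12)·L^{n−2}·(1 − L^{−n})` in `ℚ[[q]]`.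
Here `L` is the unique power series with constant term `1` and `Lⁿ = 1+q`,
`Φ₀` is the unique power series with constant term `1` and `Φ₀²·L^{n−1} = 1`,
`Φ₁ = ((n−1)/(24n))·(n + (n+1)·L⁻¹ − (2n+1)·L^{−(n+1)})·Φ₀`, and
`P0 p = Φ_{p;0}`, `P1 p = Φ_{p;1}` are defined by the recursions
`Φ_{0;0} = Φ₀`, `Φ_{0;1} = Φ₁`, `Φ_{p;0} = L·Φ_{p−1;0}`,
`Φ_{p;1} = L·Φ_{p−1;1} + D·Φ_{p−1;0}`. -/
theorem stmt_3 (n : ℕ) (hn : 1 ≤ n) (L Φ₀ Φ₁ : PowerSeries ℚ)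
    (hL0 : PowerSeries.constantCoeff L = 1) (hLn : L ^ n = 1 + PowerSeries.X)
    (hΦ₀0 : PowerSeries.constantCoeff Φ₀ = 1) (hΦ₀ : Φ₀ ^ 2 * L ^ (n - 1) = 1)
    (hΦ₁ : Φ₁ = PowerSeries.C (((n : ℚ) - 1) / (24 * (n : ℚ))) *
      (PowerSeries.C (n : ℚ) + PowerSeries.C ((n : ℚ) + 1) * L⁻¹ -
        PowerSeries.C (2 * (n : ℚ) + 1) * (L ^ (n + 1))⁻¹) * Φ₀)
    (P0 P1 : ℕ → PowerSeries ℚ)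
    (hP00 : P0 0 = Φ₀) (hP10 : P1 0 = Φ₁)
    (hP0 : ∀ p : ℕ, P0 (p + 1) = L * P0 p)
    (hP1 : ∀ p : ℕ, P1 (p + 1) = L * P1 p + Dq (P0 p)) :
    ∑ p ∈ Finset.range n, (P0 p * Φ₀⁻¹) * (P1 (n - 1 - p) * Φ₀⁻¹) =
      PowerSeries.C (n : ℚ) * L ^ (n - 1) * (Φ₁ * Φ₀⁻¹) -
        PowerSeries.C (((n : ℚ) ^ 2 - 1) / 12) * L ^ (n - 2) * (1 - (L ^ n)⁻¹) := by
  classical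
  have hLne : L ≠ 0 := by intro h; rw [h] at hL0; simp at hL0
  have hΦne : Φ₀ ≠ 0 := by intro h; rw [h] at hΦ₀0; simp at hΦ₀0
  have hLinv : L⁻¹ * L = 1 := PowerSeries.inv_mul_cancel L (by rw [hL0]; exact one_ne_zero)
  have hΦinv : Φ₀ * Φ₀⁻¹ = 1 := PowerSeries.mul_inv_cancel Φ₀ (by rw [hΦ₀0]; exact one_ne_zero)
  have hLnC : PowerSeries.constantCoeff (L ^ n) = 1 := by rw [map_pow, hL0, one_pow]
  have hLninv : (L ^ n)⁻¹ * L ^ n = 1 :=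
    PowerSeries.inv_mul_cancel _ (by rw [hLnC]; exact one_ne_zero)
  have hX : (PowerSeries.X : PowerSeries ℚ) = L ^ n - 1 := by rw [hLn]; ring
  have hDLn : PowerSeries.C (n : ℚ) * L ^ (n - 1) * Dq L = L ^ n - 1 := by
    have h := congrArg Dq hLn
    rw [Dq_pow, Dq_oneX, hX] at h
    exact h
  have hpow1 : L ^ n = L ^ (n - 1) * L := by
    conv_lhs => rw [show n = (n - 1) + 1 by omega]
    rw [pow_succ]
  have hnE : PowerSeries.C (n : ℚ) * (Dq L * L⁻¹) = 1 - (L ^ n)⁻¹ := by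
    apply mul_right_cancel₀ (pow_ne_zero n hLne)
    linear_combination (PowerSeries.C (n : ℚ) * Dq L * L⁻¹) * hpow1 +
      (PowerSeries.C (n : ℚ) * Dq L * L ^ (n - 1)) * hLinv + hDLn + hLninv
  have hkey : PowerSeries.C ((n : ℚ) - 1) * L ^ (n - 1) =
      PowerSeries.C ((n : ℚ) - 1) * (L ^ (n - 2) * L) := by
    rcases eq_or_lt_of_le hn with h | h
    · rw [← h]; norm_num
    · rw [show n - 1 = (n - 2) + 1 by omega, pow_succ]
  have hd := congrArg Dq hΦ₀
  rw [Dq_one, Dq_mul, Dq_pow, Dq_pow, show (2 : ℕ) - 1 = 1 from rfl, pow_one,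
    show n - 1 - 1 = n - 2 by omega, Nat.cast_sub hn, Nat.cast_one] at hd
  have hC2 : PowerSeries.C (-(((n : ℚ) - 1) / 2)) * PowerSeries.C 2 =
      -PowerSeries.C ((n : ℚ) - 1) := by
    rw [← map_mul, show (-(((n : ℚ) - 1) / 2)) * 2 = -((n : ℚ) - 1) by ring, map_neg]
  have hC2ne : (PowerSeries.C 2 : PowerSeries ℚ) ≠ 0 := by
    intro h
    have := congrArg PowerSeries.constantCoeff h
    simp at this
  have hDΦ : Dq Φ₀ = PowerSeries.C (-(((n : ℚ) - 1) / 2)) * (Dq L * L⁻¹) * Φ₀ := by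
    apply mul_right_cancel₀
      (mul_ne_zero (mul_ne_zero hC2ne hΦne) (pow_ne_zero (n - 1) hLne))
    linear_combination hd + (-(Dq L * L⁻¹ * Φ₀ ^ 2 * L ^ (n - 1))) * hC2 +
      (Dq L * L⁻¹ * Φ₀ ^ 2) * hkey +
      (PowerSeries.C ((n : ℚ) - 1) * Dq L * Φ₀ ^ 2 * L ^ (n - 2)) * hLinv
  -- derivative of L^p * Φ₀
  have hDP : ∀ p : ℕ, Dq (L ^ p * Φ₀) =
      PowerSeries.C ((p : ℚ) - ((n : ℚ) - 1) / 2) * (Dq L * L⁻¹) * (L ^ p * Φ₀) := by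
    intro p
    induction p with
    | zero => simpa using hDΦ
    | succ p ih =>
      have hsplit : L ^ (p + 1) * Φ₀ = L * (L ^ p * Φ₀) := by rw [pow_succ]; ring
      rw [hsplit, Dq_mul, ih]
      have hCsucc : PowerSeries.C (((p + 1 : ℕ) : ℚ) - ((n : ℚ) - 1) / 2) =
          PowerSeries.C ((p : ℚ) - ((n : ℚ) - 1) / 2) + 1 := by
        rw [show (((p + 1 : ℕ) : ℚ) - ((n : ℚ) - 1) / 2) =
          ((p : ℚ) - ((n : ℚ) - 1) / 2) + 1 by push_cast; ring, map_add, map_one]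
      linear_combination (-(Dq L * L⁻¹ * L * (L ^ p * Φ₀))) * hCsucc +
        (-(Dq L * (L ^ p * Φ₀))) * hLinv
  have hP0form : ∀ p : ℕ, P0 p = L ^ p * Φ₀ := by
    intro p
    induction p with
    | zero => simpa using hP00
    | succ p ih => rw [hP0, ih, pow_succ]; ring
  have hP1form : ∀ m : ℕ, P1 m = L ^ m * Φ₁ +
      PowerSeries.C ((m : ℚ) * ((m : ℚ) - (n : ℚ)) / 2) * (Dq L * L⁻¹) *
        (L ^ m * L⁻¹ * Φ₀) := by
    intro m
    induction m with
    | zero => simp [hP10]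
    | succ m ih =>
      rw [hP1, hP0form, ih, hDP]
      have hCs : PowerSeries.C (((m + 1 : ℕ) : ℚ) * (((m + 1 : ℕ) : ℚ) - (n : ℚ)) / 2) =
          PowerSeries.C ((m : ℚ) * ((m : ℚ) - (n : ℚ)) / 2) +
            PowerSeries.C ((m : ℚ) - ((n : ℚ) - 1) / 2) := by
        rw [← map_add]
        congr 1
        push_cast; ring
      have hps : L ^ (m + 1) = L ^ m * L := pow_succ L m
      rw [hCs, hps]
      linear_combination (-(PowerSeries.C ((m : ℚ) - ((n : ℚ) - 1) / 2) * Dq L * L⁻¹ *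
        L ^ m * Φ₀)) * hLinv
  have hterm : ∀ p ∈ Finset.range n, (P0 p * Φ₀⁻¹) * (P1 (n - 1 - p) * Φ₀⁻¹) =
      L ^ (n - 1) * (Φ₁ * Φ₀⁻¹) +
        PowerSeries.C (((n - 1 - p : ℕ) : ℚ) * (((n - 1 - p : ℕ) : ℚ) - (n : ℚ)) / 2) *
          (Dq L * L⁻¹) * (L ^ (n - 1) * L⁻¹) := by
    intro p hp
    have hpn : p < n := Finset.mem_range.mp hp
    have hpp : L ^ p * L ^ (n - 1 - p) = L ^ (n - 1) := by
      rw [← pow_add]; congr 1; omega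
    rw [hP0form, hP1form]
    linear_combination
      (Φ₁ * Φ₀⁻¹ * L ^ p * L ^ (n - 1 - p) +
        PowerSeries.C (((n - 1 - p : ℕ) : ℚ) * (((n - 1 - p : ℕ) : ℚ) - (n : ℚ)) / 2) *
          (Dq L * L⁻¹) * L⁻¹ * L ^ p * L ^ (n - 1 - p) * (Φ₀ * Φ₀⁻¹ + 1)) * hΦinv +
      (Φ₁ * Φ₀⁻¹ +
        PowerSeries.C (((n - 1 - p : ℕ) : ℚ) * (((n - 1 - p : ℕ) : ℚ) - (n : ℚ)) / 2) *
          (Dq L * L⁻¹) * L⁻¹) * hpp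
  rw [Finset.sum_congr rfl hterm, Finset.sum_add_distrib, Finset.sum_const,
    Finset.card_range]
  have hsum2 : ∑ p ∈ Finset.range n,
      PowerSeries.C (((n - 1 - p : ℕ) : ℚ) * (((n - 1 - p : ℕ) : ℚ) - (n : ℚ)) / 2) *
        (Dq L * L⁻¹) * (L ^ (n - 1) * L⁻¹) =
      PowerSeries.C (-((n : ℚ) * ((n : ℚ) ^ 2 - 1)) / 12) * (Dq L * L⁻¹) *
        (L ^ (n - 1) * L⁻¹) := by
    rw [← Finset.sum_mul, ← Finset.sum_mul, ← map_sum]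
    congr 3
    rw [Finset.sum_range_reflect (fun m => ((m : ℕ) : ℚ) * (((m : ℕ) : ℚ) - (n : ℚ)) / 2) n]
    exact sum_c n
  rw [hsum2, nsmul_eq_mul]
  have hcn : ((n : ℕ) : PowerSeries ℚ) = PowerSeries.C (n : ℚ) := by
    rw [← map_natCast (PowerSeries.C (R := ℚ)) n]
  have hkey2 : PowerSeries.C (((n : ℚ) ^ 2 - 1) / 12) * (L ^ (n - 1) * L⁻¹) =
      PowerSeries.C (((n : ℚ) ^ 2 - 1) / 12) * L ^ (n - 2) := by
    rcases eq_or_lt_of_le hn with h | h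
    · rw [← h]; norm_num
    · rw [show n - 1 = (n - 2) + 1 by omega, pow_succ L (n - 2)]
      rw [mul_assoc (L ^ (n-2)) L L⁻¹, mul_comm L L⁻¹, hLinv, mul_one]
  have hCT : PowerSeries.C (-((n : ℚ) * ((n : ℚ) ^ 2 - 1)) / 12) =
      -(PowerSeries.C (((n : ℚ) ^ 2 - 1) / 12) * PowerSeries.C (n : ℚ)) := by
    rw [← map_mul, ← map_neg]
    congr 1; ring
  rw [hcn, hCT]
  linear_combination (-(PowerSeries.C (((n : ℚ) ^ 2 - 1) / 12)) *
    (L ^ (n - 1) * L⁻¹)) * hnE + (-(1 - (L ^ n)⁻¹)) * hkey2
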